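/- The subgraph of G induced by the rational unit vectors has chromatic number exactly 3. -/

import Mathlib

open scoped RealInnerProductSpace

/-- The orthogonality graph on the rational points of the unit sphere in `ℝ³`:
vertices are the unit vectors all of whose coordinates are rational, and two
such vectors are adjacent iff they are orthogonal. -/
def rationalSphereGraph :
    SimpleGraph {x : EuclideanSpace ℝ (Fin 3) // ‖x‖ = 1 ∧ ∀ i, ∃ q : ℚ, x i = (q : ℝ)} where
  Adj u v := ⟪(u : EuclideanSpace ℝ (Fin 3)), (v : EuclideanSpace ℝ (Fin 3))⟫ = 0
  symm := ⟨fun u v h => by try dsimp only at h ⊢; rwa [real_inner_comm]⟩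
  loopless := ⟨fun u h => by
    try dsimp only at h
    have : ⟪(u : EuclideanSpace ℝ (Fin 3)), (u : EuclideanSpace ℝ (Fin 3))⟫ = 1 := by
      rw [real_inner_self_eq_norm_sq, u.2.1]; norm_num
    rw [h] at this
    exact one_ne_zero this.symm⟩

/-! ### Auxiliary number theory -/

private lemma int_odd_iff_zmod4 (a : ℤ) :
    ¬ (2:ℤ) ∣ a ↔ ((a : ZMod 4) = 1 ∨ (a : ZMod 4) = 3) := by
  have h2 := ZMod.intCast_zmod_eq_zero_iff_dvd a 2
  push_cast at h2
  rw [← h2]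
  have h : ((a : ZMod 2)) = ZMod.castHom (by norm_num : (2:ℕ) ∣ 4) (ZMod 2) (a : ZMod 4) :=
    (map_intCast _ a).symm
  rw [h]
  generalize (a : ZMod 4) = x
  revert x; decide

set_option maxRecDepth 40000 in
set_option synthInstance.maxHeartbeats 1000000 in
set_option synthInstance.maxSize 2000 in
set_option maxHeartbeats 2000000 in
private lemma zmod4_main : ∀ A B C D : ZMod 4, A^2+B^2+C^2=D^2 →
    (((D = 1 ∨ D = 3) → (((A=1∨A=3) ∧ ¬(B=1∨B=3) ∧ ¬(C=1∨C=3)) ∨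
      (¬(A=1∨A=3) ∧ (B=1∨B=3) ∧ ¬(C=1∨C=3)) ∨ (¬(A=1∨A=3) ∧ ¬(B=1∨B=3) ∧ (C=1∨C=3))))
    ∧ (¬(D = 1 ∨ D = 3) → ¬(A=1∨A=3) ∧ ¬(B=1∨B=3) ∧ ¬(C=1∨C=3))) := by decide

private lemma int_main (a b c d : ℤ) (h : a^2+b^2+c^2 = d^2) :
    (¬ (2:ℤ) ∣ d → ((¬2∣a ∧ 2∣b ∧ 2∣c) ∨ (2∣a ∧ ¬2∣b ∧ 2∣c) ∨ (2∣a ∧ 2∣b ∧ ¬2∣c)))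
    ∧ ((2:ℤ) ∣ d → 2∣a ∧ 2∣b ∧ 2∣c) := by
  have h4 : (a:ZMod 4)^2+(b:ZMod 4)^2+(c:ZMod 4)^2 = (d:ZMod 4)^2 := by
    have := congrArg (Int.cast : ℤ → ZMod 4) h
    push_cast at this; exact this
  have Z := zmod4_main _ _ _ _ h4
  simp only [← int_odd_iff_zmod4, not_not] at Z
  exact Z

/-! ### Clearing denominators -/

private lemma cast_clear (s : ℚ) (D : ℕ) (hdvd : s.den ∣ D) :
    ((s.num * (D / s.den : ℕ) : ℤ) : ℚ) = s * D := by
  obtain ⟨k, hk⟩ := hdvd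
  have h1 : (D / s.den : ℕ) = k := by rw [hk]; exact Nat.mul_div_cancel_left k s.pos
  have hden : ((s.den : ℚ)) ≠ 0 := Nat.cast_ne_zero.mpr s.den_nz
  have hs := Rat.num_div_den s
  rw [div_eq_iff hden] at hs
  rw [h1, hk]
  push_cast
  rw [hs]
  ring

private lemma parity_clear (s : ℚ) (D : ℕ) (hdvd : s.den ∣ D) (hD : ¬ (2:ℤ) ∣ (D:ℤ)) :
    ((2:ℤ) ∣ s.num * (D / s.den : ℕ) ↔ (2:ℤ) ∣ s.num) := by
  obtain ⟨k, hk⟩ := hdvd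
  have h1 : (D / s.den : ℕ) = k := by rw [hk]; exact Nat.mul_div_cancel_left k s.pos
  have hk2 : ¬ (2:ℤ) ∣ (k:ℤ) := by
    intro hdk
    exact hD (by rw [hk]; push_cast; exact hdk.mul_left _)
  rw [h1]
  constructor
  · intro h
    rcases (Int.prime_two.dvd_mul).mp h with h' | h'
    · exact h'
    · exact absurd h' hk2
  · exact fun h => h.mul_right _

/-! ### The key arithmetic facts about rational points on the unit sphere -/

private lemma rat_main (q : Fin 3 → ℚ) (h : q 0 ^ 2 + q 1 ^ 2 + q 2 ^ 2 = 1) :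
    (¬ (2:ℤ) ∣ (((q 0).den.lcm ((q 1).den.lcm (q 2).den) : ℕ) : ℤ)) ∧
    ((¬(2:ℤ)∣(q 0).num ∧ (2:ℤ)∣(q 1).num ∧ (2:ℤ)∣(q 2).num) ∨
     ((2:ℤ)∣(q 0).num ∧ ¬(2:ℤ)∣(q 1).num ∧ (2:ℤ)∣(q 2).num) ∨
     ((2:ℤ)∣(q 0).num ∧ (2:ℤ)∣(q 1).num ∧ ¬(2:ℤ)∣(q 2).num)) := by
  set D : ℕ := (q 0).den.lcm ((q 1).den.lcm (q 2).den) with hD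
  have hdvd : ∀ i, (q i).den ∣ D := by
    intro i
    fin_cases i
    · exact Nat.dvd_lcm_left _ _
    · exact (Nat.dvd_lcm_left _ _).trans (Nat.dvd_lcm_right _ _)
    · exact (Nat.dvd_lcm_right _ _).trans (Nat.dvd_lcm_right _ _)
  have hD0 : D ≠ 0 :=
    Nat.lcm_ne_zero (q 0).den_nz (Nat.lcm_ne_zero (q 1).den_nz (q 2).den_nz)
  set a : Fin 3 → ℤ := fun i => (q i).num * (D / (q i).den : ℕ) with ha
  have hcast : ∀ i, ((a i : ℤ) : ℚ) = q i * D := fun i => cast_clear (q i) D (hdvd i)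
  have hsq : a 0 ^ 2 + a 1 ^ 2 + a 2 ^ 2 = (D:ℤ)^2 := by
    have hQ : ((a 0 : ℚ))^2 + (a 1 : ℚ)^2 + (a 2 : ℚ)^2 = ((D:ℤ):ℚ)^2 := by
      rw [hcast 0, hcast 1, hcast 2]
      push_cast
      linear_combination ((D:ℚ))^2 * h
    exact_mod_cast hQ
  have hDodd : ¬ (2:ℤ) ∣ (D:ℤ) := by
    intro h2
    have hall := (int_main _ _ _ _ hsq).2 h2
    obtain ⟨E, hE⟩ : 2 ∣ D := by exact_mod_cast h2
    have hE0 : E ≠ 0 := by rintro rfl; simp at hE; exact hD0 hE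
    have key : ∀ i, (q i).den ∣ E := by
      intro i
      have h2a : (2:ℤ) ∣ a i := by
        fin_cases i
        · exact hall.1
        · exact hall.2.1
        · exact hall.2.2
      obtain ⟨m, hm⟩ := h2a
      have hEQ : ((E:ℚ)) ≠ 0 := Nat.cast_ne_zero.mpr hE0
      have hq : q i = ((m : ℚ)) / ((E:ℤ) : ℚ) := by
        have hc := hcast i
        rw [hm, hE] at hc
        push_cast at hc ⊢
        field_simp
        linarith [hc]
      have hdd := Rat.den_dvd m (E:ℤ)
      rw [Rat.divInt_eq_div, ← hq] at hdd
      exact_mod_cast hdd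
    have hDE : D ∣ E :=
      Nat.lcm_dvd (key 0) (Nat.lcm_dvd (key 1) (key 2))
    have := Nat.le_of_dvd (Nat.pos_of_ne_zero hE0) hDE
    omega
  have hpat := (int_main _ _ _ _ hsq).1 hDodd
  refine ⟨hDodd, ?_⟩
  rw [ha] at hpat
  simp only [parity_clear (q 0) D (hdvd 0) hDodd, parity_clear (q 1) D (hdvd 1) hDodd,
    parity_clear (q 2) D (hdvd 2) hDodd] at hpat
  exact hpat

private lemma int_cast_zmod2_eq_zero (x : ℤ) : ((x : ZMod 2) = 0) ↔ (2:ℤ) ∣ x := by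
  have := ZMod.intCast_zmod_eq_zero_iff_dvd x 2; push_cast at this; exact this

private lemma int_cast_zmod2_eq_one (x : ℤ) (h : ¬ (2:ℤ) ∣ x) : (x : ZMod 2) = 1 := by
  have h0 : (x : ZMod 2) ≠ 0 := fun hh => h ((int_cast_zmod2_eq_zero x).mp hh)
  revert h0; generalize (x : ZMod 2) = y; revert y; decide

private lemma rat_orth (q r : Fin 3 → ℚ)
    (hq : q 0 ^ 2 + q 1 ^ 2 + q 2 ^ 2 = 1) (hr : r 0 ^ 2 + r 1 ^ 2 + r 2 ^ 2 = 1)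
    (horth : q 0 * r 0 + q 1 * r 1 + q 2 * r 2 = 0) (i : Fin 3)
    (hqi : ¬(2:ℤ) ∣ (q i).num) (hri : ¬(2:ℤ) ∣ (r i).num)
    (hothers : ∀ j, j ≠ i → (2:ℤ) ∣ (q j).num ∧ (2:ℤ) ∣ (r j).num) : False := by
  set Dq : ℕ := (q 0).den.lcm ((q 1).den.lcm (q 2).den) with hDq
  set Dr : ℕ := (r 0).den.lcm ((r 1).den.lcm (r 2).den) with hDr
  set D : ℕ := Nat.lcm Dq Dr with hD
  have hdvdq : ∀ i, (q i).den ∣ D := by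
    intro i
    refine Dvd.dvd.trans ?_ (Nat.dvd_lcm_left _ _)
    fin_cases i
    · exact Nat.dvd_lcm_left _ _
    · exact (Nat.dvd_lcm_left _ _).trans (Nat.dvd_lcm_right _ _)
    · exact (Nat.dvd_lcm_right _ _).trans (Nat.dvd_lcm_right _ _)
  have hdvdr : ∀ i, (r i).den ∣ D := by
    intro i
    refine Dvd.dvd.trans ?_ (Nat.dvd_lcm_right _ _)
    fin_cases i
    · exact Nat.dvd_lcm_left _ _
    · exact (Nat.dvd_lcm_left _ _).trans (Nat.dvd_lcm_right _ _)
    · exact (Nat.dvd_lcm_right _ _).trans (Nat.dvd_lcm_right _ _)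
  have hDodd : ¬ (2:ℤ) ∣ (D:ℤ) := by
    intro h2
    have h2n : 2 ∣ D := by exact_mod_cast h2
    have : 2 ∣ Dq * Dr := h2n.trans (Nat.lcm_dvd_mul _ _)
    rcases (Nat.prime_two.dvd_mul).mp this with h' | h'
    · exact (rat_main q hq).1 (by exact_mod_cast h')
    · exact (rat_main r hr).1 (by exact_mod_cast h')
  set b : Fin 3 → ℤ := fun i => (q i).num * (D / (q i).den : ℕ) with hb
  set c : Fin 3 → ℤ := fun i => (r i).num * (D / (r i).den : ℕ) with hc
  have hcastb : ∀ i, ((b i : ℤ) : ℚ) = q i * D := fun i => cast_clear (q i) D (hdvdq i)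
  have hcastc : ∀ i, ((c i : ℤ) : ℚ) = r i * D := fun i => cast_clear (r i) D (hdvdr i)
  have hsum : b 0 * c 0 + b 1 * c 1 + b 2 * c 2 = 0 := by
    have hQ : (b 0 : ℚ) * c 0 + (b 1 : ℚ) * c 1 + (b 2 : ℚ) * c 2 = 0 := by
      rw [hcastb 0, hcastb 1, hcastb 2, hcastc 0, hcastc 1, hcastc 2]
      linear_combination ((D:ℚ))^2 * horth
    exact_mod_cast hQ
  have h2 := congrArg (Int.cast : ℤ → ZMod 2) hsum
  push_cast at h2
  have hbodd : (b i : ZMod 2) = 1 :=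
    int_cast_zmod2_eq_one _ (by rw [parity_clear (q i) D (hdvdq i) hDodd]; exact hqi)
  have hcodd : (c i : ZMod 2) = 1 :=
    int_cast_zmod2_eq_one _ (by rw [parity_clear (r i) D (hdvdr i) hDodd]; exact hri)
  have hbev : ∀ j, j ≠ i → (b j : ZMod 2) = 0 := fun j hj =>
    (int_cast_zmod2_eq_zero _).mpr ((hothers j hj).1.mul_right _)
  fin_cases i
  · have e1 : (b 0 : ZMod 2) = 1 := hbodd
    have e2 : (c 0 : ZMod 2) = 1 := hcodd
    rw [e1, e2, hbev 1 (by decide), hbev 2 (by decide)] at h2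
    simp at h2
  · have e1 : (b 1 : ZMod 2) = 1 := hbodd
    have e2 : (c 1 : ZMod 2) = 1 := hcodd
    rw [e1, e2, hbev 0 (by decide), hbev 2 (by decide)] at h2
    simp at h2
  · have e1 : (b 2 : ZMod 2) = 1 := hbodd
    have e2 : (c 2 : ZMod 2) = 1 := hcodd
    rw [e1, e2, hbev 0 (by decide), hbev 1 (by decide)] at h2
    simp at h2

/-! ### Graph-level constructions -/

private noncomputable def rsgQ
    (v : {x : EuclideanSpace ℝ (Fin 3) // ‖x‖ = 1 ∧ ∀ i, ∃ q : ℚ, x i = (q : ℝ)}) :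
    Fin 3 → ℚ := fun i => Classical.choose (v.2.2 i)

private lemma rsgQ_spec (v : {x : EuclideanSpace ℝ (Fin 3) // ‖x‖ = 1 ∧ ∀ i, ∃ q : ℚ, x i = (q : ℝ)})
    (i : Fin 3) : (v : EuclideanSpace ℝ (Fin 3)) i = (rsgQ v i : ℝ) :=
  Classical.choose_spec (v.2.2 i)

private lemma rsgQ_sumsq (v : {x : EuclideanSpace ℝ (Fin 3) // ‖x‖ = 1 ∧ ∀ i, ∃ q : ℚ, x i = (q : ℝ)}) :
    rsgQ v 0 ^ 2 + rsgQ v 1 ^ 2 + rsgQ v 2 ^ 2 = 1 := by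
  have hn := v.2.1
  rw [EuclideanSpace.norm_eq] at hn
  rw [Real.sqrt_eq_one] at hn
  have hR : ((rsgQ v 0 : ℝ))^2 + (rsgQ v 1 : ℝ)^2 + (rsgQ v 2 : ℝ)^2 = 1 := by
    rw [Fin.sum_univ_three] at hn
    simp only [Real.norm_eq_abs, sq_abs] at hn
    rw [← rsgQ_spec v 0, ← rsgQ_spec v 1, ← rsgQ_spec v 2]
    exact hn
  exact_mod_cast hR

private noncomputable def rsgColor
    (v : {x : EuclideanSpace ℝ (Fin 3) // ‖x‖ = 1 ∧ ∀ i, ∃ q : ℚ, x i = (q : ℝ)}) : Fin 3 :=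
  if ¬ (2:ℤ) ∣ (rsgQ v 0).num then 0 else if ¬ (2:ℤ) ∣ (rsgQ v 1).num then 1 else 2

private noncomputable def rsgE (i : Fin 3) :
    {x : EuclideanSpace ℝ (Fin 3) // ‖x‖ = 1 ∧ ∀ i, ∃ q : ℚ, x i = (q : ℝ)} :=
  ⟨EuclideanSpace.single i (1:ℝ),
    by simp [EuclideanSpace.norm_single (𝕜 := ℝ) i 1],
    fun j => ⟨if j = i then 1 else 0, by
      rw [EuclideanSpace.single_apply]
      split <;> simp⟩⟩

theorem rationalSphereGraph_chromaticNumber :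
    rationalSphereGraph.chromaticNumber = 3 := by
  classical
  have horth : ∀ v w, rationalSphereGraph.Adj v w →
      rsgQ v 0 * rsgQ w 0 + rsgQ v 1 * rsgQ w 1 + rsgQ v 2 * rsgQ w 2 = 0 := by
    intro v w hadj
    have h : ⟪(v : EuclideanSpace ℝ (Fin 3)), (w : EuclideanSpace ℝ (Fin 3))⟫ = 0 := hadj
    rw [PiLp.inner_apply, Fin.sum_univ_three] at h
    simp only [RCLike.inner_apply, conj_trivial] at h
    rw [rsgQ_spec v 0, rsgQ_spec v 1, rsgQ_spec v 2,
      rsgQ_spec w 0, rsgQ_spec w 1, rsgQ_spec w 2] at h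
    have h' : rsgQ w 0 * rsgQ v 0 + rsgQ w 1 * rsgQ v 1 + rsgQ w 2 * rsgQ v 2 = 0 := by
      exact_mod_cast h
    linear_combination h'
  have hc3 : rationalSphereGraph.Colorable 3 := by
    refine ⟨SimpleGraph.Coloring.mk rsgColor ?_⟩
    intro v w hadj hcol
    have hqs := rsgQ_sumsq v
    have hrs := rsgQ_sumsq w
    have hor := horth v w hadj
    rcases (rat_main (rsgQ v) hqs).2 with ⟨h0,h1,h2⟩|⟨h0,h1,h2⟩|⟨h0,h1,h2⟩ <;>
      rcases (rat_main (rsgQ w) hrs).2 with ⟨g0,g1,g2⟩|⟨g0,g1,g2⟩|⟨g0,g1,g2⟩ <;>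
      simp only [rsgColor, h0, h1, h2, g0, g1, g2, not_true, not_false_iff,
        if_true, if_false, not_not] at hcol <;>
      first
      | exact absurd hcol (by decide)
      | skip
    · exact rat_orth (rsgQ v) (rsgQ w) hqs hrs hor 0 h0 g0
        (by intro j hj; fin_cases j
            · exact absurd rfl hj
            · exact ⟨h1, g1⟩
            · exact ⟨h2, g2⟩)
    · exact rat_orth (rsgQ v) (rsgQ w) hqs hrs hor 1 h1 g1
        (by intro j hj; fin_cases j
            · exact ⟨h0, g0⟩
            · exact absurd rfl hj
            · exact ⟨h2, g2⟩)
    · exact rat_orth (rsgQ v) (rsgQ w) hqs hrs hor 2 h2 g2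
        (by intro j hj; fin_cases j
            · exact ⟨h0, g0⟩
            · exact ⟨h1, g1⟩
            · exact absurd rfl hj)
  have hadjE : ∀ i j : Fin 3, i ≠ j → rationalSphereGraph.Adj (rsgE i) (rsgE j) := by
    intro i j hij
    show ⟪(EuclideanSpace.single i (1:ℝ)), (EuclideanSpace.single j (1:ℝ))⟫ = 0
    rw [EuclideanSpace.inner_single_left]
    simp [EuclideanSpace.single_apply, hij]
  have hc2 : ¬ rationalSphereGraph.Colorable 2 := by
    rintro ⟨C⟩
    have d01 := C.valid (hadjE 0 1 (by decide))
    have d02 := C.valid (hadjE 0 2 (by decide))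
    have d12 := C.valid (hadjE 1 2 (by decide))
    have : ∀ x y z : Fin 2, x ≠ y → x ≠ z → y ≠ z → False := by decide
    exact this _ _ _ d01 d02 d12
  have le3 : rationalSphereGraph.chromaticNumber ≤ 3 := by
    have := hc3.chromaticNumber_le
    exact_mod_cast this
  refine le_antisymm le3 ?_
  by_contra hlt
  push_neg at hlt
  have h2' : rationalSphereGraph.chromaticNumber ≤ (2:ℕ) := by
    have h32 : (3:ℕ∞) = 2 + 1 := by norm_num
    rw [h32] at hlt
    have := Order.le_of_lt_add_one hlt
    exact_mod_cast this
  exact hc2 (SimpleGraph.chromaticNumber_le_iff_colorable.mp h2')
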